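/- The action of N on Λ extends to a continuous action ν : N × Λ̄ → Λ̄ on the compactified apartment: the Weyl group W (permutation matrices) acts by w(η_i^I) = η_{w(i)}^{w(I)} on each boundary component Λ_I, and t ∈ T acts on Λ_I by translation by ν_I(ρ_I(t)); moreover for every w ∈ W, t ∈ T, bounded open U ⊂ Λ and nonempty I ⊂ n̲ one has ν(w)(C_U^I) = C_{ν(w)(U)}^{w(I)} and ν(t)(C_U^I) = C_{ν(t)(U)}^I. -/
import Mathlib


open Set Pointwise Topology Filter

namespace CompApp

variable {n : ℕ}

/-- The component `Λ_I`: the quotient of the functions `I → ℝ` by the line of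
constants (so `Λ_I = Σ_{i∈I} ℝ η_i^I` with the relation `Σ_{i∈I} η_i^I = 0`). -/
abbrev Comp (I : Finset (Fin n)) : Type :=
  (↥I → ℝ) ⧸ (Submodule.span ℝ {(1 : ↥I → ℝ)})

/-- quotient map onto a component -/
noncomputable def mkC (I : Finset (Fin n)) : (↥I → ℝ) →ₗ[ℝ] Comp I :=
  Submodule.mkQ _

/-- The apartment `Λ` itself, i.e. the component for `I = {1,…,n}`. -/
abbrev Apt (n : ℕ) : Type := Comp (Finset.univ : Finset (Fin n))

/-- restriction of functions from `{1,…,n}` to `J` -/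
def resL (J : Finset (Fin n)) :
    ((↥(Finset.univ : Finset (Fin n)) → ℝ)) →ₗ[ℝ] (↥J → ℝ) :=
  LinearMap.funLeft ℝ ℝ (fun j => ⟨j.1, Finset.mem_univ _⟩)

/-- The projection `r_J : Λ → Λ_J`, `Σ x_i η_i ↦ Σ_{i∈J} x_i η_i^J`. -/
noncomputable def resQ (J : Finset (Fin n)) : Apt n →ₗ[ℝ] Comp J :=
  Submodule.mapQ _ _ (resL J) (by
    rw [Submodule.span_le]
    intro x hx
    rw [Set.mem_singleton_iff] at hx
    subst hx
    exact Submodule.mem_comap.mpr (Submodule.subset_span rfl))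

variable [NeZero n]

/-- The compactified apartment `Λ̄ = ⋃_{∅≠I⊆{1,…,n}} Λ_I` as a set. -/
def CApt (n : ℕ) : Type := Σ I : {I : Finset (Fin n) // I.Nonempty}, Comp I.1

/-- The embedding `Λ ↪ Λ̄`. -/
def emb (z : Apt n) : CApt n := ⟨⟨Finset.univ, Finset.univ_nonempty⟩, z⟩

/-- The point of the boundary component `Λ_I` inside `Λ̄`. -/
def embC (I : Finset (Fin n)) (hI : I.Nonempty) (y : Comp I) : CApt n := ⟨⟨I, hI⟩, y⟩

/-- The cone `D_I = Σ_{i∉I} ℝ_{≥0}(−η_i) ⊆ Λ`. -/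
noncomputable def cone (I : Finset (Fin n)) : Set (Apt n) :=
  (mkC _) '' {x | (∀ l : ↥(Finset.univ : Finset (Fin n)), (l : Fin n) ∈ I → x l = 0) ∧
    ∀ l : ↥(Finset.univ : Finset (Fin n)), (l : Fin n) ∉ I → x l ≤ 0}

/-- The basic open set `C_U^I = ⋃_{I ⊆ J} r_J(U + D_I) ⊆ Λ̄`. -/
noncomputable def CUI (U : Set (Apt n)) (I : Finset (Fin n)) : Set (CApt n) :=
  {p | I ⊆ p.1.1 ∧ p.2 ∈ resQ p.1.1 '' (U + cone I)}

/-- Boundedness for subsets of the apartment `Λ`. -/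
def BoundedA (U : Set (Apt n)) : Prop :=
  ∃ t : Set (↥(Finset.univ : Finset (Fin n)) → ℝ),
    Bornology.IsBounded t ∧ U ⊆ (mkC _) '' t

/-- The topology of `Λ̄`: generated by the open subsets of `Λ` together with the
sets `C_U^I` for nonempty proper `I` and bounded open `U ⊆ Λ`. -/
noncomputable instance : TopologicalSpace (CApt n) :=
  TopologicalSpace.generateFrom
    ({s | ∃ U : Set (Apt n), IsOpen U ∧ s = emb '' U} ∪
     {s | ∃ (U : Set (Apt n)) (I : Finset (Fin n)), I.Nonempty ∧ I ≠ Finset.univ ∧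
        IsOpen U ∧ BoundedA U ∧ s = CUI U I})

/-- The root `a_{ij} = χ_i − χ_j` as a linear functional on `Λ`. -/
noncomputable def aFun (i j : Fin n) : Apt n →ₗ[ℝ] ℝ :=
  Submodule.liftQ _
    (LinearMap.proj (⟨i, Finset.mem_univ i⟩ : ↥(Finset.univ : Finset (Fin n))) -
      LinearMap.proj ⟨j, Finset.mem_univ j⟩) (by
    rw [Submodule.span_le]
    intro x hx
    rw [Set.mem_singleton_iff] at hx
    subst hx
    simp [LinearMap.mem_ker])

/-- The root `b_{ij}` of the component `Λ_I` (for `i, j ∈ I`). -/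
noncomputable def bFun (I : Finset (Fin n)) (i j : ↥I) : Comp I →ₗ[ℝ] ℝ :=
  Submodule.liftQ _
    (LinearMap.proj (R := ℝ) (φ := fun _ : ↥I => ℝ) i -
      LinearMap.proj (R := ℝ) (φ := fun _ : ↥I => ℝ) j) (by
    rw [Submodule.span_le]
    intro x hx
    rw [Set.mem_singleton_iff] at hx
    subst hx
    simp [LinearMap.mem_ker])

/-- The closure in `Λ̄` of the half-space `{ z ∈ Λ : a_{ij}(z) ≥ s }`. -/
noncomputable def halfCl (i j : Fin n) (s : ℝ) : Set (CApt n) :=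
  closure (emb '' {z : Apt n | s ≤ aFun i j z})

/-- `f_Ω(a) = inf{ t : Ω ⊆ closure{ z ∈ Λ : a(z) ≥ −t } } ∈ ℝ ∪ {±∞}`,
for `a = a_{ij}` (with `inf ∅ = +∞`). -/
noncomputable def fO (Ω : Set (CApt n)) (i j : Fin n) : EReal :=
  sInf {t : EReal | ∃ s : ℝ, t = (s : EReal) ∧ Ω ⊆ halfCl i j (-s)}

/-- For `w` in the Weyl group (a permutation of `{1,…,n}`) and `j ∈ w(J)`, the
index `w⁻¹(j) ∈ J`. -/
def permIdx {n : ℕ} (w : Equiv.Perm (Fin n)) (J : Finset (Fin n))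
    (j : ↥(J.image w)) : ↥J :=
  ⟨w.symm j, by
    obtain ⟨a, ha, hwa⟩ := Finset.mem_image.mp j.2
    rw [← hwa]
    simpa using ha⟩

/-- The action of `w ∈ W` on the component `Λ_J`: `w(η_i^J) = η_{w(i)}^{w(J)}`. -/
noncomputable def permC {n : ℕ} (w : Equiv.Perm (Fin n)) (J : Finset (Fin n)) :
    Comp J →ₗ[ℝ] Comp (J.image w) :=
  Submodule.mapQ _ _ (LinearMap.funLeft ℝ ℝ (permIdx w J)) (by
    rw [Submodule.span_le]
    intro x hx
    rw [Set.mem_singleton_iff] at hx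
    subst hx
    exact Submodule.mem_comap.mpr (Submodule.subset_span rfl))

/-- The action of `w ∈ W` on the apartment `Λ`. -/
noncomputable def permA {n : ℕ} (w : Equiv.Perm (Fin n)) : Apt n →ₗ[ℝ] Apt n :=
  Submodule.mapQ _ _
    (LinearMap.funLeft ℝ ℝ
      (fun l : ↥(Finset.univ : Finset (Fin n)) => ⟨w.symm l, Finset.mem_univ _⟩)) (by
    rw [Submodule.span_le]
    intro x hx
    rw [Set.mem_singleton_iff] at hx
    subst hx
    exact Submodule.mem_comap.mpr (Submodule.subset_span rfl))

/-- The action of `w ∈ W` on the compactified apartment `Λ̄`, sending `Λ_J` to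
`Λ_{w(J)}` by `η_i^J ↦ η_{w(i)}^{w(J)}`. -/
noncomputable def permAct {n : ℕ} [NeZero n] (w : Equiv.Perm (Fin n)) :
    CApt n → CApt n :=
  fun p => ⟨⟨p.1.1.image w, p.1.2.image w⟩, permC w p.1.1 p.2⟩

/-- The action of a torus element `t ∈ T` with `ν(t) = λ ∈ Λ` on the
compactified apartment: on `Λ_J` it is translation by `ν_J(ρ_J(t)) = r_J(λ)`. -/
noncomputable def transAct {n : ℕ} [NeZero n] (lam : Apt n) : CApt n → CApt n :=
  fun p => ⟨p.1, p.2 + resQ p.1.1 lam⟩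

set_option linter.unusedSectionVars false

section Aux
variable [NeZero n]
----------------------------------------------------------------

lemma mk_surj (J : Finset (Fin n)) : Function.Surjective (mkC (n := n) J) :=
  Submodule.Quotient.mk_surjective _

lemma permA_mk (w : Equiv.Perm (Fin n)) (f : ↥(Finset.univ : Finset (Fin n)) → ℝ) :
    permA w (mkC _ f) = mkC _ (fun l => f ⟨w.symm l.1, Finset.mem_univ _⟩) := by
  simp only [permA, mkC, Submodule.mkQ_apply, Submodule.mapQ_apply]
  rfl

lemma permC_mk (w : Equiv.Perm (Fin n)) (J : Finset (Fin n)) (f : ↥J → ℝ) :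
    permC w J (mkC J f) = mkC _ (fun j => f (permIdx w J j)) := by
  simp only [permC, mkC, Submodule.mkQ_apply, Submodule.mapQ_apply]
  rfl

lemma resQ_mk (J : Finset (Fin n)) (f : ↥(Finset.univ : Finset (Fin n)) → ℝ) :
    resQ J (mkC _ f) = mkC J (fun j => f ⟨j.1, Finset.mem_univ _⟩) := by
  simp only [resQ, mkC, Submodule.mkQ_apply, Submodule.mapQ_apply]
  rfl

lemma resQ_univ (z : Apt n) : resQ Finset.univ z = z := by
  obtain ⟨f, rfl⟩ := mk_surj _ z
  rw [resQ_mk]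

lemma permC_resQ (w : Equiv.Perm (Fin n)) (J : Finset (Fin n)) (z : Apt n) :
    permC w J (resQ J z) = resQ (J.image w) (permA w z) := by
  obtain ⟨f, rfl⟩ := mk_surj _ z
  rw [resQ_mk, permC_mk, permA_mk, resQ_mk]
  rfl

lemma permA_inv (w : Equiv.Perm (Fin n)) (z : Apt n) :
    permA w⁻¹ (permA w z) = z := by
  obtain ⟨f, rfl⟩ := mk_surj _ z
  rw [permA_mk, permA_mk]
  congr 1
  funext l
  congr 1
  ext
  simp [Equiv.Perm.inv_def]

lemma permA_inv' (w : Equiv.Perm (Fin n)) (z : Apt n) :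
    permA w (permA w⁻¹ z) = z := by
  have := permA_inv w⁻¹ z
  rwa [inv_inv] at this

lemma sigma_mk_eq {J K : Finset (Fin n)} (hJ : J.Nonempty) (hK : K.Nonempty)
    (h : J = K) (f : ↥J → ℝ) (g : ↥K → ℝ)
    (hfg : ∀ i (hi : i ∈ J) (hk : i ∈ K), f ⟨i, hi⟩ = g ⟨i, hk⟩) :
    (⟨⟨J, hJ⟩, mkC J f⟩ : CApt n) = ⟨⟨K, hK⟩, mkC K g⟩ := by
  subst h
  have : f = g := funext fun i => hfg i.1 i.2 i.2
  rw [this]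


lemma image_univ_perm (w : Equiv.Perm (Fin n)) :
    (Finset.univ : Finset (Fin n)).image ⇑w = Finset.univ :=
  Finset.image_univ_of_surjective w.surjective

lemma permAct_emb (w : Equiv.Perm (Fin n)) (z : Apt n) :
    permAct w (emb z) = emb (permA w z) := by
  obtain ⟨f, rfl⟩ := mk_surj _ z
  show (⟨⟨Finset.univ.image ⇑w, _⟩, permC w _ (mkC _ f)⟩ : CApt n) = _
  rw [permC_mk, permA_mk]
  exact sigma_mk_eq _ _ (image_univ_perm w) _ _ (fun i hi hk => rfl)

lemma transAct_emb (lam z : Apt n) :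
    transAct lam (emb z) = emb (z + lam) := by
  show (⟨⟨Finset.univ, _⟩, z + resQ Finset.univ lam⟩ : CApt n) = _
  rw [resQ_univ]
  rfl

lemma permAct_permAct (w : Equiv.Perm (Fin n)) (p : CApt n) :
    permAct w⁻¹ (permAct w p) = p := by
  obtain ⟨⟨J, hJ⟩, x⟩ := p
  obtain ⟨f, rfl⟩ := mk_surj _ x
  show (⟨⟨(J.image ⇑w).image ⇑w⁻¹, _⟩, permC w⁻¹ _ (permC w _ (mkC _ f))⟩ : CApt n) = _
  rw [permC_mk, permC_mk]
  refine sigma_mk_eq _ _ ?_ _ _ ?_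
  · rw [Finset.image_image]
    have : (⇑w⁻¹ ∘ ⇑w) = id := by
      funext a; simp [Equiv.Perm.inv_def]
    rw [this, Finset.image_id]
  · intro i hi hk
    congr 1
    ext
    simp [permIdx, Equiv.Perm.inv_def]

lemma permAct_permAct' (w : Equiv.Perm (Fin n)) (p : CApt n) :
    permAct w (permAct w⁻¹ p) = p := by
  have := permAct_permAct w⁻¹ p
  rwa [inv_inv] at this

lemma permAct_injective (w : Equiv.Perm (Fin n)) :
    Function.Injective (permAct (n := n) w) :=
  Function.LeftInverse.injective (permAct_permAct w)

lemma transAct_transAct (lam : Apt n) (p : CApt n) :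
    transAct (-lam) (transAct lam p) = p := by
  obtain ⟨a, b⟩ := p
  show (⟨a, b + resQ a.1 lam + resQ a.1 (-lam)⟩ : CApt n) = ⟨a, b⟩
  rw [map_neg, add_neg_cancel_right]

lemma transAct_transAct' (lam : Apt n) (p : CApt n) :
    transAct lam (transAct (-lam) p) = p := by
  have := transAct_transAct (-lam) p
  rwa [neg_neg] at this

lemma transAct_injective (lam : Apt n) :
    Function.Injective (transAct (n := n) lam) :=
  Function.LeftInverse.injective (transAct_transAct lam)

lemma cone_subset (w : Equiv.Perm (Fin n)) (I : Finset (Fin n)) :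
    permA w '' cone I ⊆ cone (I.image ⇑w) := by
  rintro _ ⟨_, ⟨f, ⟨hf0, hf1⟩, rfl⟩, rfl⟩
  rw [permA_mk]
  refine ⟨_, ⟨?_, ?_⟩, rfl⟩
  · intro l hl
    refine hf0 _ ?_
    obtain ⟨a, ha, hwa⟩ := Finset.mem_image.mp hl
    simpa [← hwa] using ha
  · intro l hl
    refine hf1 _ ?_
    intro hmem
    exact hl (by simpa using Finset.mem_image_of_mem ⇑w hmem)

lemma permA_image_image (w : Equiv.Perm (Fin n)) (V : Set (Apt n)) :
    permA w⁻¹ '' (permA w '' V) = V := by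
  ext z
  constructor
  · rintro ⟨_, ⟨v, hv, rfl⟩, rfl⟩
    rwa [permA_inv]
  · intro hz
    exact ⟨permA w z, ⟨z, hz, rfl⟩, permA_inv w z⟩

lemma permA_image_image' (w : Equiv.Perm (Fin n)) (V : Set (Apt n)) :
    permA w '' (permA w⁻¹ '' V) = V := by
  have := permA_image_image w⁻¹ V
  rwa [inv_inv] at this

lemma finset_image_image (w : Equiv.Perm (Fin n)) (K : Finset (Fin n)) :
    (K.image ⇑w⁻¹).image ⇑w = K := by
  rw [Finset.image_image]
  have : (⇑w ∘ ⇑w⁻¹) = id := by funext a; simp [Equiv.Perm.inv_def]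
  rw [this, Finset.image_id]

lemma finset_image_image' (w : Equiv.Perm (Fin n)) (K : Finset (Fin n)) :
    (K.image ⇑w).image ⇑w⁻¹ = K := by
  have := finset_image_image w⁻¹ K
  rwa [inv_inv] at this

lemma permAct_image_subset (w : Equiv.Perm (Fin n)) (U : Set (Apt n))
    (I : Finset (Fin n)) :
    permAct w '' CUI U I ⊆ CUI (permA w '' U) (I.image ⇑w) := by
  rintro _ ⟨⟨⟨J, hJ⟩, y⟩, ⟨hIJ, z, hz, hy⟩, rfl⟩
  dsimp only at hIJ hy
  rw [← hy]
  refine ⟨Finset.image_subset_image hIJ, permA w z, ?_, (permC_resQ w J z).symm⟩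
  obtain ⟨u, hu, c, hc, rfl⟩ := Set.mem_add.mp hz
  exact Set.mem_add.mpr ⟨permA w u, ⟨u, hu, rfl⟩, permA w c,
    cone_subset w I ⟨c, hc, rfl⟩, (map_add _ _ _).symm⟩

lemma permAct_CUI (w : Equiv.Perm (Fin n)) (U : Set (Apt n)) (I : Finset (Fin n)) :
    permAct w '' CUI U I = CUI (permA w '' U) (I.image ⇑w) := by
  refine Set.Subset.antisymm (permAct_image_subset w U I) ?_
  intro x hx
  have h1 : permAct w⁻¹ x ∈
      CUI (permA w⁻¹ '' (permA w '' U)) ((I.image ⇑w).image ⇑w⁻¹) :=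
    permAct_image_subset w⁻¹ _ _ ⟨x, hx, rfl⟩
  rw [permA_image_image, finset_image_image'] at h1
  exact ⟨permAct w⁻¹ x, h1, permAct_permAct' w x⟩

lemma transAct_CUI (lam : Apt n) (U : Set (Apt n)) (I : Finset (Fin n)) :
    transAct lam '' CUI U I = CUI ((fun v => v + lam) '' U) I := by
  ext p
  constructor
  · rintro ⟨⟨⟨J, hJ⟩, y⟩, ⟨hIJ, z, hz, hy⟩, rfl⟩
    dsimp only at hIJ hy
    rw [← hy]
    refine ⟨hIJ, z + lam, ?_, map_add (resQ J) z lam⟩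
    obtain ⟨u, hu, c, hc, rfl⟩ := Set.mem_add.mp hz
    exact Set.mem_add.mpr ⟨u + lam, ⟨u, hu, rfl⟩, c, hc, by abel⟩
  · rintro ⟨hIJ, z, hz, hzp⟩
    obtain ⟨_, ⟨u, hu, rfl⟩, c, hc, rfl⟩ := Set.mem_add.mp hz
    obtain ⟨⟨J, hJ⟩, y⟩ := p
    dsimp only at hIJ hzp
    refine ⟨⟨⟨J, hJ⟩, resQ J (u + c)⟩, ⟨hIJ, u + c,
      Set.mem_add.mpr ⟨u, hu, c, hc, rfl⟩, rfl⟩, ?_⟩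
    show (⟨⟨J, hJ⟩, resQ J (u + c) + resQ J lam⟩ : CApt n) = _
    have : resQ J (u + c) + resQ J lam = y := by
      rw [← hzp, ← map_add]; congr 1; abel
    rw [this]


lemma permA_image_eq_preimage (w : Equiv.Perm (Fin n)) (U : Set (Apt n)) :
    permA w '' U = permA w⁻¹ ⁻¹' U := by
  ext z
  constructor
  · rintro ⟨u, hu, rfl⟩
    show permA w⁻¹ (permA w u) ∈ U
    rwa [permA_inv]
  · intro hz
    exact ⟨permA w⁻¹ z, hz, permA_inv' w z⟩

lemma quotMap : Topology.IsQuotientMap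
    (⇑(mkC (Finset.univ : Finset (Fin n)))) :=
  (Submodule.isOpenQuotientMap_mkQ _).isQuotientMap

lemma isOpen_permA_image (w : Equiv.Perm (Fin n)) {U : Set (Apt n)}
    (hU : IsOpen U) : IsOpen (permA w '' U) := by
  rw [permA_image_eq_preimage, ← quotMap.isOpen_preimage]
  have hset : ⇑(mkC _) ⁻¹' (⇑(permA w⁻¹) ⁻¹' U) =
      (fun (f : ↥(Finset.univ : Finset (Fin n)) → ℝ)
        (l : ↥(Finset.univ : Finset (Fin n))) =>
          f ⟨(w⁻¹ : Equiv.Perm (Fin n)).symm l.1, Finset.mem_univ _⟩) ⁻¹'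
        (⇑(mkC _) ⁻¹' U) := by
    ext f
    simp only [Set.mem_preimage, permA_mk]
  rw [hset]
  exact ((continuous_pi fun l => continuous_apply _).comp continuous_id).isOpen_preimage
    _ (hU.preimage quotMap.continuous)

lemma trans_image_eq_preimage (lam : Apt n) (U : Set (Apt n)) :
    (fun v => v + lam) '' U = (fun v => v + -lam) ⁻¹' U := by
  ext z
  constructor
  · rintro ⟨u, hu, rfl⟩
    show u + lam + -lam ∈ U
    rwa [add_neg_cancel_right]
  · intro hz
    exact ⟨z + -lam, hz, neg_add_cancel_right z lam⟩

lemma isOpen_trans_image (lam : Apt n) {U : Set (Apt n)}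
    (hU : IsOpen U) : IsOpen ((fun v => v + lam) '' U) := by
  obtain ⟨g, hg⟩ := mk_surj (Finset.univ : Finset (Fin n)) lam
  rw [trans_image_eq_preimage, ← quotMap.isOpen_preimage]
  have hset : ⇑(mkC _) ⁻¹' ((fun v => v + -lam) ⁻¹' U) =
      (fun (f : ↥(Finset.univ : Finset (Fin n)) → ℝ) => f + -g) ⁻¹'
        (⇑(mkC _) ⁻¹' U) := by
    ext f
    simp only [Set.mem_preimage, map_add, map_neg, hg]
  rw [hset]
  exact (continuous_add_right _).isOpen_preimage _ (hU.preimage quotMap.continuous)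

lemma bounded_permA (w : Equiv.Perm (Fin n)) {U : Set (Apt n)}
    (hU : BoundedA U) : BoundedA (permA w '' U) := by
  obtain ⟨t, ht, hUt⟩ := hU
  refine ⟨(fun f (l : ↥(Finset.univ : Finset (Fin n))) =>
      f ⟨w.symm l.1, Finset.mem_univ _⟩) '' t, ?_, ?_⟩
  · rw [isBounded_iff_forall_norm_le] at ht ⊢
    obtain ⟨C, hC⟩ := ht
    refine ⟨C, ?_⟩
    rintro _ ⟨f, hf, rfl⟩
    have h0 : (0 : ℝ) ≤ C := le_trans (norm_nonneg f) (hC f hf)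
    rw [pi_norm_le_iff_of_nonneg h0]
    exact fun l => le_trans (norm_le_pi_norm f _) (hC f hf)
  · rintro _ ⟨u, hu, rfl⟩
    obtain ⟨f, hf, rfl⟩ := hUt hu
    exact ⟨_, ⟨f, hf, rfl⟩, (permA_mk w f).symm⟩

lemma bounded_trans (lam : Apt n) {U : Set (Apt n)}
    (hU : BoundedA U) : BoundedA ((fun v => v + lam) '' U) := by
  obtain ⟨t, ht, hUt⟩ := hU
  obtain ⟨g, hg⟩ := mk_surj (Finset.univ : Finset (Fin n)) lam
  refine ⟨(fun f => f + g) '' t, ?_, ?_⟩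
  · rw [isBounded_iff_forall_norm_le] at ht ⊢
    obtain ⟨C, hC⟩ := ht
    refine ⟨C + ‖g‖, ?_⟩
    rintro _ ⟨f, hf, rfl⟩
    exact le_trans (norm_add_le f g) (by linarith [hC f hf])
  · rintro _ ⟨u, hu, rfl⟩
    obtain ⟨f, hf, rfl⟩ := hUt hu
    exact ⟨_, ⟨f, hf, rfl⟩, by rw [map_add, hg]⟩

lemma permAct_preimage_emb (w : Equiv.Perm (Fin n)) (U : Set (Apt n)) :
    permAct w ⁻¹' (emb '' U) = emb '' (permA w⁻¹ '' U) := by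
  ext p
  constructor
  · rintro ⟨u, hu, h⟩
    refine ⟨permA w⁻¹ u, ⟨u, hu, rfl⟩, ?_⟩
    rw [← permAct_emb, h, permAct_permAct]
  · rintro ⟨_, ⟨u, hu, rfl⟩, rfl⟩
    exact ⟨u, hu, by rw [permAct_emb, permA_inv']⟩

lemma permAct_preimage_CUI (w : Equiv.Perm (Fin n)) (V : Set (Apt n))
    (K : Finset (Fin n)) :
    permAct w ⁻¹' CUI V K = CUI (permA w⁻¹ '' V) (K.image ⇑w⁻¹) := by
  have h := permAct_CUI w (permA w⁻¹ '' V) (K.image ⇑w⁻¹)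
  rw [permA_image_image', finset_image_image] at h
  rw [← h, Set.preimage_image_eq _ (permAct_injective w)]

lemma trans_image_image (lam : Apt n) (V : Set (Apt n)) :
    (fun v => v + lam) '' ((fun v => v + -lam) '' V) = V := by
  rw [Set.image_image]
  simp [neg_add_cancel_right]

lemma transAct_preimage_emb (lam : Apt n) (U : Set (Apt n)) :
    transAct lam ⁻¹' (emb '' U) = emb '' ((fun v => v + -lam) '' U) := by
  ext p
  constructor
  · rintro ⟨u, hu, h⟩
    refine ⟨u + -lam, ⟨u, hu, rfl⟩, ?_⟩
    rw [← transAct_transAct lam p, ← h, transAct_emb]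
  · rintro ⟨_, ⟨u, hu, rfl⟩, rfl⟩
    exact ⟨u, hu, by rw [transAct_emb, neg_add_cancel_right]⟩

lemma transAct_preimage_CUI (lam : Apt n) (V : Set (Apt n))
    (K : Finset (Fin n)) :
    transAct lam ⁻¹' CUI V K = CUI ((fun v => v + -lam) '' V) K := by
  have h := transAct_CUI lam ((fun v => v + -lam) '' V) K
  rw [trans_image_image] at h
  rw [← h, Set.preimage_image_eq _ (transAct_injective lam)]

theorem weyl_and_torus_action_continuous' {n : ℕ} [NeZero n] :
    (∀ w : Equiv.Perm (Fin n), Continuous (permAct (n := n) w)) ∧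
    (∀ lam : Apt n, Continuous (transAct (n := n) lam)) := by
  constructor
  · intro w
    rw [continuous_generateFrom_iff]
    rintro s (⟨U, hU, rfl⟩ | ⟨V, K, hK, hKu, hV, hVb, rfl⟩)
    · rw [permAct_preimage_emb]
      exact TopologicalSpace.isOpen_generateFrom_of_mem
        (Or.inl ⟨permA w⁻¹ '' U, isOpen_permA_image w⁻¹ hU, rfl⟩)
    · rw [permAct_preimage_CUI]
      refine TopologicalSpace.isOpen_generateFrom_of_mem
        (Or.inr ⟨permA w⁻¹ '' V, K.image ⇑w⁻¹, hK.image _, ?_,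
          isOpen_permA_image w⁻¹ hV, bounded_permA w⁻¹ hVb, rfl⟩)
      intro h
      apply hKu
      have h2 := congrArg (Finset.image ⇑w) h
      rw [finset_image_image, image_univ_perm] at h2
      exact h2
  · intro lam
    rw [continuous_generateFrom_iff]
    rintro s (⟨U, hU, rfl⟩ | ⟨V, K, hK, hKu, hV, hVb, rfl⟩)
    · rw [transAct_preimage_emb]
      exact TopologicalSpace.isOpen_generateFrom_of_mem
        (Or.inl ⟨(fun v => v + -lam) '' U, isOpen_trans_image (-lam) hU, rfl⟩)
    · rw [transAct_preimage_CUI]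
      exact TopologicalSpace.isOpen_generateFrom_of_mem
        (Or.inr ⟨(fun v => v + -lam) '' V, K, hK, hKu,
          isOpen_trans_image (-lam) hV, bounded_trans (-lam) hVb, rfl⟩)


end Aux

/-- The action of `N = T ⋊ W` on `Λ` extends to a continuous action on the
compactified apartment `Λ̄`: each `w ∈ W` and each translation act continuously,
the actions extend those on `Λ`, and on the basic open sets one has
`ν(w)(C_U^I) = C_{ν(w)(U)}^{w(I)}` and `ν(t)(C_U^I) = C_{ν(t)(U)}^I`. -/
theorem weyl_and_torus_action_continuous {n : ℕ} [NeZero n] :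
    (∀ w : Equiv.Perm (Fin n), Continuous (permAct (n := n) w)) ∧
    (∀ lam : Apt n, Continuous (transAct (n := n) lam)) ∧
    (∀ (w : Equiv.Perm (Fin n)) (z : Apt n), permAct w (emb z) = emb (permA w z)) ∧
    (∀ (lam z : Apt n), transAct lam (emb z) = emb (z + lam)) ∧
    (∀ (w : Equiv.Perm (Fin n)) (U : Set (Apt n)) (I : Finset (Fin n)),
      I.Nonempty → permAct w '' CUI U I = CUI (permA w '' U) (I.image w)) ∧
    (∀ (lam : Apt n) (U : Set (Apt n)) (I : Finset (Fin n)),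
      I.Nonempty → transAct lam '' CUI U I = CUI ((fun v => v + lam) '' U) I) :=
  ⟨(weyl_and_torus_action_continuous' (n := n)).1,
   (weyl_and_torus_action_continuous' (n := n)).2,
   permAct_emb, transAct_emb,
   fun w U I _ => permAct_CUI w U I,
   fun lam U I _ => transAct_CUI lam U I⟩

end CompApp
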